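/- In the Z-module M = Z ⊕ Z, the family B_M of coprime cosets fails the basis intersection criterion: with N₁ = Z ⊕ 0, N₂ = 0 ⊕ Z and m₁ = m₂ = (1,1), the intersection (m₁ + N₁) ∩ (m₂ + N₂) = {(1,1)}, and there is no nonzero submodule K of M with (1,1) + K ⊆ (m₁ + N₁) ∩ (m₂ + N₂). -/
import Mathlib


open Pointwise

/-- In the `ℤ`-module `ℤ × ℤ`, the family of coprime cosets fails the basis
intersection criterion. -/
theorem zxz_coprime_cosets_fail_basis :
    letI N₁ : Submodule ℤ (ℤ × ℤ) := Submodule.prod ⊤ ⊥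
    letI N₂ : Submodule ℤ (ℤ × ℤ) := Submodule.prod ⊥ ⊤
    ((((1 : ℤ), (1 : ℤ)) +ᵥ (N₁ : Set (ℤ × ℤ))) ∩
      (((1 : ℤ), (1 : ℤ)) +ᵥ (N₂ : Set (ℤ × ℤ))) = {((1 : ℤ), (1 : ℤ))}) ∧
    ¬ ∃ K : Submodule ℤ (ℤ × ℤ), K ≠ ⊥ ∧
      (((1 : ℤ), (1 : ℤ)) +ᵥ (K : Set (ℤ × ℤ))) ⊆
        ((((1 : ℤ), (1 : ℤ)) +ᵥ (N₁ : Set (ℤ × ℤ))) ∩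
          (((1 : ℤ), (1 : ℤ)) +ᵥ (N₂ : Set (ℤ × ℤ)))) := by
  have hinter : ((((1 : ℤ), (1 : ℤ)) +ᵥ ((Submodule.prod ⊤ ⊥ : Submodule ℤ (ℤ × ℤ)) : Set (ℤ × ℤ))) ∩
      (((1 : ℤ), (1 : ℤ)) +ᵥ ((Submodule.prod ⊥ ⊤ : Submodule ℤ (ℤ × ℤ)) : Set (ℤ × ℤ))) = {((1 : ℤ), (1 : ℤ))}) := by
    ext x
    simp only [Set.mem_inter_iff, Set.mem_vadd_set, Set.mem_singleton_iff,
      SetLike.mem_coe, Submodule.mem_prod, Submodule.mem_top, Submodule.mem_bot]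
    constructor
    · rintro ⟨⟨a, ⟨-, ha2⟩, rfl⟩, ⟨b, ⟨hb1, -⟩, hb⟩⟩
      have : (1 : ℤ) + b.1 = 1 + a.1 ∧ (1 : ℤ) + b.2 = 1 + a.2 := by
        simpa [Prod.ext_iff] using hb
      have ha1 : a.1 = 0 := by omega
      simp [Prod.ext_iff, ha1, ha2]
    · rintro rfl
      exact ⟨⟨0, by simp⟩, ⟨0, by simp⟩⟩
  refine ⟨hinter, ?_⟩
  rintro ⟨K, hK, hsub⟩
  apply hK
  rw [Submodule.eq_bot_iff]
  intro k hk
  have : ((1 : ℤ), (1 : ℤ)) + k ∈ ({((1 : ℤ), (1 : ℤ))} : Set (ℤ × ℤ)) := by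
    rw [← hinter]
    exact hsub ⟨k, hk, rfl⟩
  simpa [Prod.ext_iff, add_eq_left] using this
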